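/- In the general case, the Cayley-conjugated free transfer matrix satisfies C_N M⁻¹ 𝒯⁰ M C_N* = [[e^{ik}, 0, 0, 0],[0, u cosh γ, 0, u sinh γ],[0, 0, e^{−ik}, 0],[0, u sinh γ, 0, u cosh γ]] in four blocks of sizes s, N−s, s, N−s. -/

import Mathlib

open Matrix


open Matrix

/-- The basis-change matrix M from the paper (eq. (18)), in four blocks of sizes
    s, h, s, h, built from the elliptic data k and hyperbolic data γ, u and the
    unitary U diagonalizing W. -/
noncomputable def Mmat (s h : ℕ) (k : Fin s → ℝ) (γ u : Fin h → ℝ)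
    (U : Matrix (Fin s ⊕ Fin h) (Fin s ⊕ Fin h) ℂ) :
    Matrix ((Fin s ⊕ Fin h) ⊕ (Fin s ⊕ Fin h)) ((Fin s ⊕ Fin h) ⊕ (Fin s ⊕ Fin h)) ℂ :=
  Matrix.fromBlocks U 0 0 U *
  Matrix.fromBlocks
    (Matrix.fromBlocks
      (Matrix.diagonal fun i => (((Real.sqrt (Real.sin (k i)))⁻¹ : ℝ) : ℂ)) 0 0
      (Matrix.diagonal fun j => ((u j * (Real.sqrt (2 * Real.sinh (γ j)))⁻¹ : ℝ) : ℂ)))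
    (Matrix.fromBlocks 0 0 0
      (Matrix.diagonal fun j => (((Real.sqrt (2 * Real.sinh (γ j)))⁻¹ : ℝ) : ℂ)))
    (Matrix.fromBlocks
      (Matrix.diagonal fun i =>
        ((Real.cos (k i) * (Real.sqrt (Real.sin (k i)))⁻¹ : ℝ) : ℂ)) 0 0
      (Matrix.diagonal fun j =>
        ((Real.exp (-γ j) * (Real.sqrt (2 * Real.sinh (γ j)))⁻¹ : ℝ) : ℂ)))
    (Matrix.fromBlocks
      (Matrix.diagonal fun i => ((Real.sqrt (Real.sin (k i)) : ℝ) : ℂ)) 0 0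
      (Matrix.diagonal fun j =>
        ((u j * Real.exp (γ j) * (Real.sqrt (2 * Real.sinh (γ j)))⁻¹ : ℝ) : ℂ)))

/-- The Cayley matrix C_N = (1/√2)[[1, i],[1, −i]] in N×N blocks (N = s + h). -/
noncomputable def CayleyN (s h : ℕ) :
    Matrix ((Fin s ⊕ Fin h) ⊕ (Fin s ⊕ Fin h)) ((Fin s ⊕ Fin h) ⊕ (Fin s ⊕ Fin h)) ℂ :=
  ((Real.sqrt 2 : ℂ)⁻¹) • Matrix.fromBlocks 1 (Complex.I • 1) 1 (-(Complex.I • 1))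

/-- Key abstract computation: conjugating the normal-form symplectic data by the
    Cayley transform, with all blocks diagonal. -/
lemma cayley_key {n : Type*} [Fintype n] [DecidableEq n]
    (a b c d t r1 r2 r3 r4 : n → ℂ)
    (h1 : ∀ x, ((d x*t x - b x)*a x - d x*c x)
        - Complex.I*Complex.I*((a x - c x*t x)*b x + c x*d x)
        + Complex.I*(((a x - c x*t x)*a x + c x*c x) - ((d x*t x - b x)*b x - d x*d x)) = 2 * r1 x)
    (h2 : ∀ x, ((d x*t x - b x)*a x - d x*c x)
        + Complex.I*Complex.I*((a x - c x*t x)*b x + c x*d x)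
        + Complex.I*(((a x - c x*t x)*a x + c x*c x) + ((d x*t x - b x)*b x - d x*d x)) = 2 * r2 x)
    (h3 : ∀ x, ((d x*t x - b x)*a x - d x*c x)
        + Complex.I*Complex.I*((a x - c x*t x)*b x + c x*d x)
        - Complex.I*(((a x - c x*t x)*a x + c x*c x) + ((d x*t x - b x)*b x - d x*d x)) = 2 * r3 x)
    (h4 : ∀ x, ((d x*t x - b x)*a x - d x*c x)
        - Complex.I*Complex.I*((a x - c x*t x)*b x + c x*d x)
        - Complex.I*(((a x - c x*t x)*a x + c x*c x) - ((d x*t x - b x)*b x - d x*d x)) = 2 * r4 x) :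
    ((Real.sqrt 2 : ℂ)⁻¹ • fromBlocks 1 (Complex.I • 1) 1 (-(Complex.I • 1))) *
      (fromBlocks (diagonal d) (-(diagonal b)) (-(diagonal c)) (diagonal a) *
       (fromBlocks (diagonal t) (-1) 1 0 *
        (fromBlocks (diagonal a) (diagonal b) (diagonal c) (diagonal d) *
          ((Real.sqrt 2 : ℂ)⁻¹ • fromBlocks 1 1 (-(Complex.I • 1)) (Complex.I • 1))))) =
    fromBlocks (diagonal r1) (diagonal r2) (diagonal r3) (diagonal r4) := by
  have h2' : ((Real.sqrt 2 : ℂ))⁻¹ * ((Real.sqrt 2 : ℂ))⁻¹ = (2:ℂ)⁻¹ := by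
    rw [← mul_inv, ← Complex.ofReal_mul, Real.mul_self_sqrt (by norm_num : (0:ℝ) ≤ 2)]
    norm_num
  simp only [Matrix.smul_mul, Matrix.mul_smul, smul_smul, h2', fromBlocks_multiply,
    Matrix.diagonal_mul_diagonal, Matrix.mul_one, Matrix.one_mul, Matrix.neg_mul,
    Matrix.mul_neg, smul_mul_assoc, mul_smul_comm, neg_neg,
    Matrix.zero_mul, Matrix.mul_zero, add_zero, zero_add, neg_zero, smul_zero]
  simp only [Matrix.mul_add, Matrix.mul_neg, Matrix.diagonal_mul_diagonal, mul_smul_comm,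
    ← Matrix.diagonal_smul, Matrix.diagonal_neg, Matrix.diagonal_add, Matrix.fromBlocks_smul,
    Pi.smul_apply, smul_eq_mul]
  ext i j
  rcases i with i | i <;> rcases j with j | j <;>
    simp only [Matrix.fromBlocks, Matrix.of_apply, Sum.elim_inl, Sum.elim_inr] <;>
  · by_cases hij : i = j
    · subst hij
      rw [Matrix.diagonal_apply_eq, Matrix.diagonal_apply_eq]
      simp only [Pi.smul_apply, smul_eq_mul]
      first
        | linear_combination h1 i / 2
        | linear_combination h2 i / 2
        | linear_combination h3 i / 2
        | linear_combination h4 i / 2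
    · rw [Matrix.diagonal_apply_ne _ hij, Matrix.diagonal_apply_ne _ hij]


lemma ellP11 (V CO : ℂ) (hv : V ≠ 0) :
    (V * (2 * CO) - 0) * V⁻¹ - V * (CO * V⁻¹) = CO := by
  field_simp
  ring
lemma ellP21 (V CO SI : ℂ) (hv : V ≠ 0) (hv2 : V * V = SI)
    (hp : SI * SI + CO * CO = 1) :
    (V⁻¹ - CO * V⁻¹ * (2 * CO)) * V⁻¹ + CO * V⁻¹ * (CO * V⁻¹) = SI := by
  field_simp
  linear_combination -hp - SI * hv2
lemma ellP22 (V CO : ℂ) (hv : V ≠ 0) :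
    (V⁻¹ - CO * V⁻¹ * (2 * CO)) * 0 + CO * V⁻¹ * V = CO := by
  field_simp
  ring
lemma hypP11 (V CH SH UU : ℂ) (hv : V ≠ 0) (hv2 : V * V = 2 * SH)
    (hp : CH * CH - SH * SH = 1) (huu : UU * UU = 1) :
    (UU * (CH + SH) * V⁻¹ * (2 * UU * CH) - V⁻¹) * (UU * V⁻¹)
      - UU * (CH + SH) * V⁻¹ * ((CH - SH) * V⁻¹) = UU * (CH + SH) := by
  field_simp
  linear_combination 2 * (CH + SH) * CH * UU * huu + UU * hp - UU * (CH + SH) * hv2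
lemma hypP12 (V CH SH UU : ℂ) (hv : V ≠ 0) (hv2 : V * V = 2 * SH)
    (hp : CH * CH - SH * SH = 1) (huu : UU * UU = 1) :
    (UU * (CH + SH) * V⁻¹ * (2 * UU * CH) - V⁻¹) * V⁻¹
      - UU * (CH + SH) * V⁻¹ * (UU * (CH + SH) * V⁻¹) = 0 := by
  field_simp
  linear_combination 2 * (CH + SH) * CH * huu + hp - (CH + SH) * (CH + SH) * huu
lemma hypP21 (V CH SH UU : ℂ) (hv : V ≠ 0) (hv2 : V * V = 2 * SH)
    (hp : CH * CH - SH * SH = 1) (huu : UU * UU = 1) :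
    (UU * V⁻¹ - (CH - SH) * V⁻¹ * (2 * UU * CH)) * (UU * V⁻¹)
      + (CH - SH) * V⁻¹ * ((CH - SH) * V⁻¹) = 0 := by
  field_simp
  linear_combination (1 - 2 * CH * (CH - SH)) * huu - hp
lemma hypP22 (V CH SH UU : ℂ) (hv : V ≠ 0) (hv2 : V * V = 2 * SH)
    (hp : CH * CH - SH * SH = 1) (huu : UU * UU = 1) :
    (UU * V⁻¹ - (CH - SH) * V⁻¹ * (2 * UU * CH)) * V⁻¹
      + (CH - SH) * V⁻¹ * (UU * (CH + SH) * V⁻¹) = UU * (CH - SH) := by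
  field_simp
  linear_combination -UU * hp - UU * (CH - SH) * hv2

/-- Normal form of the free transfer matrix in U(N,N):
    C_N M⁻¹ 𝒯⁰ M C_N* = [[e^{ik},0,0,0],[0,u cosh γ,0,u sinh γ],
    [0,0,e^{−ik},0],[0,u sinh γ,0,u cosh γ]]. -/
theorem stmt13 (s h : ℕ) (lam : Fin s ⊕ Fin h → ℝ) (E : ℝ)
    (k : Fin s → ℝ) (γ u : Fin h → ℝ)
    (U : Matrix (Fin s ⊕ Fin h) (Fin s ⊕ Fin h) ℂ)
    (hU : U ∈ Matrix.unitaryGroup (Fin s ⊕ Fin h) ℂ)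
    (hk : ∀ i, k i ∈ Set.Ioo 0 Real.pi ∧ E = -2 * Real.cos (k i) + lam (Sum.inl i))
    (hγ : ∀ j, 0 < γ j) (hu : ∀ j, u j = 1 ∨ u j = -1)
    (hEh : ∀ j, E = -2 * u j * Real.cosh (γ j) + lam (Sum.inr j)) :
    ∀ (W : Matrix (Fin s ⊕ Fin h) (Fin s ⊕ Fin h) ℂ),
      W = U * Matrix.diagonal (fun i => (lam i : ℂ)) * Uᴴ →
    CayleyN s h * (Mmat s h k γ u U)⁻¹ * Matrix.fromBlocks (W - (E : ℂ) • 1) (-1) 1 0 *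
        Mmat s h k γ u U * (CayleyN s h)ᴴ =
      Matrix.fromBlocks
        (Matrix.fromBlocks (Matrix.diagonal fun i => Complex.exp (Complex.I * (k i))) 0 0
          (Matrix.diagonal fun j => ((u j * Real.cosh (γ j) : ℝ) : ℂ)))
        (Matrix.fromBlocks 0 0 0
          (Matrix.diagonal fun j => ((u j * Real.sinh (γ j) : ℝ) : ℂ)))
        (Matrix.fromBlocks 0 0 0
          (Matrix.diagonal fun j => ((u j * Real.sinh (γ j) : ℝ) : ℂ)))
        (Matrix.fromBlocks (Matrix.diagonal fun i => Complex.exp (-(Complex.I * (k i)))) 0 0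
          (Matrix.diagonal fun j => ((u j * Real.cosh (γ j) : ℝ) : ℂ))) := by
  intro W hW
  classical
  -- scalar data
  set af : (Fin s ⊕ Fin h) → ℂ :=
    Sum.elim (fun i => (((Real.sqrt (Real.sin (k i)))⁻¹ : ℝ) : ℂ))
      (fun j => ((u j * (Real.sqrt (2 * Real.sinh (γ j)))⁻¹ : ℝ) : ℂ)) with haf
  set bf : (Fin s ⊕ Fin h) → ℂ :=
    Sum.elim (fun _ => (0 : ℂ))
      (fun j => (((Real.sqrt (2 * Real.sinh (γ j)))⁻¹ : ℝ) : ℂ)) with hbf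
  set cf : (Fin s ⊕ Fin h) → ℂ :=
    Sum.elim (fun i => ((Real.cos (k i) * (Real.sqrt (Real.sin (k i)))⁻¹ : ℝ) : ℂ))
      (fun j => ((Real.exp (-γ j) * (Real.sqrt (2 * Real.sinh (γ j)))⁻¹ : ℝ) : ℂ)) with hcf
  set df : (Fin s ⊕ Fin h) → ℂ :=
    Sum.elim (fun i => ((Real.sqrt (Real.sin (k i)) : ℝ) : ℂ))
      (fun j => ((u j * Real.exp (γ j) * (Real.sqrt (2 * Real.sinh (γ j)))⁻¹ : ℝ) : ℂ)) with hdf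
  set tf : (Fin s ⊕ Fin h) → ℂ := fun x => (lam x : ℂ) - (E : ℂ) with htf
  set r1 : (Fin s ⊕ Fin h) → ℂ :=
    Sum.elim (fun i => Complex.exp (Complex.I * (k i)))
      (fun j => ((u j * Real.cosh (γ j) : ℝ) : ℂ)) with hr1
  set r2 : (Fin s ⊕ Fin h) → ℂ :=
    Sum.elim (fun _ => (0 : ℂ)) (fun j => ((u j * Real.sinh (γ j) : ℝ) : ℂ)) with hr2
  set r4 : (Fin s ⊕ Fin h) → ℂ :=
    Sum.elim (fun i => Complex.exp (-(Complex.I * (k i))))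
      (fun j => ((u j * Real.cosh (γ j) : ℝ) : ℂ)) with hr4
  -- basic positivity facts
  have hsin : ∀ i, 0 < Real.sin (k i) := fun i =>
    Real.sin_pos_of_pos_of_lt_pi (hk i).1.1 (hk i).1.2
  have hvs : ∀ i, (Real.sqrt (Real.sin (k i)) : ℂ) ≠ 0 := by
    intro i
    have := Real.sqrt_pos.2 (hsin i)
    exact_mod_cast ne_of_gt this
  have hvs2 : ∀ i, (Real.sqrt (Real.sin (k i)) : ℂ) * (Real.sqrt (Real.sin (k i)) : ℂ)
      = (Real.sin (k i) : ℂ) := by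
    intro i
    rw [← Complex.ofReal_mul, Real.mul_self_sqrt (le_of_lt (hsin i))]
  have hsinh : ∀ j, 0 < Real.sinh (γ j) := fun j => Real.sinh_pos_iff.2 (hγ j)
  have hvh : ∀ j, (Real.sqrt (2 * Real.sinh (γ j)) : ℂ) ≠ 0 := by
    intro j
    have := Real.sqrt_pos.2 (by linarith [hsinh j] : (0:ℝ) < 2 * Real.sinh (γ j))
    exact_mod_cast ne_of_gt this
  have hvh2 : ∀ j, (Real.sqrt (2 * Real.sinh (γ j)) : ℂ) * (Real.sqrt (2 * Real.sinh (γ j)) : ℂ)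
      = (2 * Real.sinh (γ j) : ℝ) := by
    intro j
    rw [← Complex.ofReal_mul, Real.mul_self_sqrt (by linarith [hsinh j])]
  have hu2 : ∀ j, (u j : ℂ) * (u j : ℂ) = 1 := by
    intro j
    rcases hu j with h' | h' <;> rw [h'] <;> norm_num
  have htl : ∀ i, tf (Sum.inl i) = 2 * (Real.cos (k i) : ℂ) := by
    intro i
    have := (hk i).2
    simp only [htf]
    push_cast
    rw [this]
    push_cast
    ring
  have htr : ∀ j, tf (Sum.inr j) = 2 * (u j : ℂ) * (Real.cosh (γ j) : ℂ) := by
    intro j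
    have := hEh j
    simp only [htf]
    push_cast
    rw [this]
    push_cast
    ring
  -- unitarity
  have hU1 : Uᴴ * U = 1 := by
    have := hU.1
    rwa [Matrix.star_eq_conjTranspose] at this
  have hU2 : U * Uᴴ = 1 := by
    have := hU.2
    rwa [Matrix.star_eq_conjTranspose] at this
  -- the S factor of M
  have hM : Mmat s h k γ u U = Matrix.fromBlocks U 0 0 U *
      Matrix.fromBlocks (diagonal af) (diagonal bf) (diagonal cf) (diagonal df) := by
    rw [Mmat]
    congr 1
    rw [haf, hbf, hcf, hdf, ← Matrix.fromBlocks_diagonal, ← Matrix.fromBlocks_diagonal,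
      ← Matrix.fromBlocks_diagonal, ← Matrix.fromBlocks_diagonal, Matrix.diagonal_zero]
  -- the explicit inverse of M
  have hdet : ∀ x, df x * af x - bf x * cf x = 1 := by
    rintro (i | j)
    · simp only [haf, hbf, hcf, hdf, Sum.elim_inl]
      push_cast
      field_simp [hvs i]
      ring
    · simp only [haf, hbf, hcf, hdf, Sum.elim_inr, Complex.ofReal_mul, Complex.ofReal_inv,
        Complex.ofReal_exp, Complex.ofReal_neg]
      have hv := hvh j
      have hv2 : ((Real.sqrt (2 * Real.sinh (γ j)) : ℝ) : ℂ) *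
          ((Real.sqrt (2 * Real.sinh (γ j)) : ℝ) : ℂ) = 2 * (Real.sinh (γ j) : ℂ) := by
        rw [hvh2 j]; push_cast; ring
      have e2 : Complex.exp ((γ j : ℂ)) - Complex.exp (-(γ j : ℂ)) = 2 * (Real.sinh (γ j) : ℂ) := by
        have : Real.exp (γ j) - Real.exp (-γ j) = 2 * Real.sinh (γ j) := by
          rw [Real.sinh_eq]; ring
        calc Complex.exp ((γ j : ℂ)) - Complex.exp (-(γ j : ℂ))
            = ((Real.exp (γ j) - Real.exp (-γ j) : ℝ) : ℂ) := by push_cast; ring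
          _ = 2 * (Real.sinh (γ j) : ℂ) := by rw [this]; push_cast; ring
      set V := ((Real.sqrt (2 * Real.sinh (γ j)) : ℝ) : ℂ) with hVdef
      field_simp
      linear_combination Complex.exp ((γ j : ℂ)) * hu2 j + e2 - hv2
  have hMinv : (Matrix.fromBlocks (diagonal df) (-(diagonal bf)) (-(diagonal cf)) (diagonal af) *
      Matrix.fromBlocks Uᴴ 0 0 Uᴴ) * Mmat s h k γ u U = 1 := by
    rw [hM, mul_assoc, ← mul_assoc (Matrix.fromBlocks Uᴴ 0 0 Uᴴ)]
    have : Matrix.fromBlocks Uᴴ 0 0 Uᴴ * Matrix.fromBlocks U 0 0 U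
        = (1 : Matrix ((Fin s ⊕ Fin h) ⊕ (Fin s ⊕ Fin h)) _ ℂ) := by
      rw [fromBlocks_multiply]
      simp [hU1]
    rw [this, one_mul, fromBlocks_multiply]
    simp only [Matrix.neg_mul, Matrix.diagonal_mul_diagonal, Matrix.diagonal_neg,
      Matrix.diagonal_add]
    have e1 : (fun i => df i * af i + -(bf i * cf i)) = fun _ => (1:ℂ) := by
      funext x; have := hdet x; linear_combination this
    have e2 : (fun i => df i * bf i + -(bf i * df i)) = fun _ => (0:ℂ) := by
      funext x; ring
    have e3 : (fun i => -(cf i * af i) + af i * cf i) = fun _ => (0:ℂ) := by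
      funext x; ring
    have e4 : (fun i => -(cf i * bf i) + af i * df i) = fun _ => (1:ℂ) := by
      funext x; have := hdet x; linear_combination this
    rw [← Matrix.fromBlocks_one]
    ext x y
    rcases x with x | x <;> rcases y with y | y <;>
      simp only [Matrix.fromBlocks, Matrix.of_apply, Sum.elim_inl, Sum.elim_inr] <;>
    · by_cases hxy : x = y
      · subst hxy
        rw [Matrix.diagonal_apply_eq]
        simp only [Matrix.one_apply_eq, Matrix.zero_apply]
        first
          | linear_combination hdet x
          | ring
      · rw [Matrix.diagonal_apply_ne _ hxy]
        simp [Matrix.one_apply_ne hxy]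
  have hMinvEq : (Mmat s h k γ u U)⁻¹ =
      Matrix.fromBlocks (diagonal df) (-(diagonal bf)) (-(diagonal cf)) (diagonal af) *
        Matrix.fromBlocks Uᴴ 0 0 Uᴴ := Matrix.inv_eq_left_inv hMinv
  -- conjugation of the transfer matrix by blockdiag(U,U)
  have hmidblock : Uᴴ * (W - (E:ℂ) • 1) * U = diagonal tf := by
    rw [hW, Matrix.mul_sub, Matrix.sub_mul, Matrix.mul_smul, Matrix.smul_mul, Matrix.mul_one]
    have e : Uᴴ * (U * Matrix.diagonal (fun i => (lam i : ℂ)) * Uᴴ) * U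
        = Uᴴ * U * Matrix.diagonal (fun i => (lam i : ℂ)) * (Uᴴ * U) := by
      simp only [mul_assoc]
    rw [e, hU1, one_mul, mul_one, Matrix.smul_one_eq_diagonal, ← Matrix.diagonal_sub]
  have hconj : ∀ Z : Matrix ((Fin s ⊕ Fin h) ⊕ (Fin s ⊕ Fin h))
      ((Fin s ⊕ Fin h) ⊕ (Fin s ⊕ Fin h)) ℂ,
      Matrix.fromBlocks Uᴴ 0 0 Uᴴ * (Matrix.fromBlocks (W - (E:ℂ) • 1) (-1) 1 0 *
        (Matrix.fromBlocks U 0 0 U * Z)) = Matrix.fromBlocks (diagonal tf) (-1) 1 0 * Z := by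
    intro Z
    rw [← mul_assoc, ← mul_assoc]
    congr 1
    rw [fromBlocks_multiply, fromBlocks_multiply]
    simp only [Matrix.mul_zero, Matrix.zero_mul, add_zero, zero_add, Matrix.mul_neg,
      Matrix.mul_one, Matrix.one_mul, Matrix.neg_mul]
    rw [hU1, ← hmidblock, neg_zero]
  -- Cayley conjugate transpose
  have hCH : (CayleyN s h)ᴴ =
      ((Real.sqrt 2 : ℂ))⁻¹ • fromBlocks 1 1 (-(Complex.I • 1)) (Complex.I • 1) := by
    rw [CayleyN, Matrix.conjTranspose_smul, Matrix.fromBlocks_conjTranspose]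
    congr 1
    · simp [Complex.star_def, map_inv₀, Complex.conj_ofReal]
    · simp [Matrix.conjTranspose_smul, Matrix.conjTranspose_one, Matrix.conjTranspose_neg,
        Complex.star_def, Complex.conj_I, neg_smul]
  -- pythagoras / hyperbolic identities (complex casts)
  have hpy : ∀ i, ((Real.sin (k i)) : ℂ) * (Real.sin (k i)) +
      ((Real.cos (k i)) : ℂ) * (Real.cos (k i)) = 1 := by
    intro i
    have h' : Real.sin (k i) * Real.sin (k i) + Real.cos (k i) * Real.cos (k i) = 1 := by
      have := Real.sin_sq_add_cos_sq (k i)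
      rw [pow_two, pow_two] at this
      exact this
    exact_mod_cast h'
  have hpyh : ∀ j, ((Real.cosh (γ j)) : ℂ) * (Real.cosh (γ j)) -
      ((Real.sinh (γ j)) : ℂ) * (Real.sinh (γ j)) = 1 := by
    intro j
    have h' : Real.cosh (γ j) * Real.cosh (γ j) - Real.sinh (γ j) * Real.sinh (γ j) = 1 := by
      have := Real.cosh_sq_sub_sinh_sq (γ j)
      rw [pow_two, pow_two] at this
      exact this
    exact_mod_cast h'
  have heg : ∀ j, Complex.exp ((γ j : ℂ)) = (Real.cosh (γ j) : ℂ) + (Real.sinh (γ j) : ℂ) := by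
    intro j
    rw [← Complex.ofReal_exp, ← Real.cosh_add_sinh]
    push_cast
    ring
  have hen : ∀ j, Complex.exp (-(γ j : ℂ)) = (Real.cosh (γ j) : ℂ) - (Real.sinh (γ j) : ℂ) := by
    intro j
    rw [show -((γ j : ℝ) : ℂ) = ((-γ j : ℝ) : ℂ) by push_cast; ring,
      ← Complex.ofReal_exp, ← Real.cosh_sub_sinh]
    push_cast
    ring
  have hv2C : ∀ j, ((Real.sqrt (2 * Real.sinh (γ j)) : ℝ) : ℂ) *
      ((Real.sqrt (2 * Real.sinh (γ j)) : ℝ) : ℂ) = 2 * (Real.sinh (γ j) : ℂ) := by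
    intro j
    rw [hvh2 j]; push_cast; ring
  -- elliptic components
  have P11e : ∀ i, (df (Sum.inl i) * tf (Sum.inl i) - bf (Sum.inl i)) * af (Sum.inl i)
      - df (Sum.inl i) * cf (Sum.inl i) = ((Real.cos (k i)) : ℂ) := by
    intro i
    simp only [haf, hbf, hcf, hdf, Sum.elim_inl, htl, Complex.ofReal_mul, Complex.ofReal_inv]
    linear_combination ellP11 ((Real.sqrt (Real.sin (k i)) : ℝ) : ℂ) ((Real.cos (k i)) : ℂ) (hvs i)
  have P12e : ∀ i, (df (Sum.inl i) * tf (Sum.inl i) - bf (Sum.inl i)) * bf (Sum.inl i)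
      - df (Sum.inl i) * df (Sum.inl i) = -((Real.sin (k i)) : ℂ) := by
    intro i
    simp only [haf, hbf, hcf, hdf, Sum.elim_inl, htl, Complex.ofReal_mul, Complex.ofReal_inv]
    linear_combination -hvs2 i
  have P21e : ∀ i, (af (Sum.inl i) - cf (Sum.inl i) * tf (Sum.inl i)) * af (Sum.inl i)
      + cf (Sum.inl i) * cf (Sum.inl i) = ((Real.sin (k i)) : ℂ) := by
    intro i
    simp only [haf, hbf, hcf, hdf, Sum.elim_inl, htl, Complex.ofReal_mul, Complex.ofReal_inv]
    linear_combination ellP21 ((Real.sqrt (Real.sin (k i)) : ℝ) : ℂ) ((Real.cos (k i)) : ℂ)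
      ((Real.sin (k i)) : ℂ) (hvs i) (hvs2 i) (hpy i)
  have P22e : ∀ i, (af (Sum.inl i) - cf (Sum.inl i) * tf (Sum.inl i)) * bf (Sum.inl i)
      + cf (Sum.inl i) * df (Sum.inl i) = ((Real.cos (k i)) : ℂ) := by
    intro i
    simp only [haf, hbf, hcf, hdf, Sum.elim_inl, htl, Complex.ofReal_mul, Complex.ofReal_inv]
    linear_combination ellP22 ((Real.sqrt (Real.sin (k i)) : ℝ) : ℂ) ((Real.cos (k i)) : ℂ) (hvs i)
  -- hyperbolic components
  have P11h : ∀ j, (df (Sum.inr j) * tf (Sum.inr j) - bf (Sum.inr j)) * af (Sum.inr j)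
      - df (Sum.inr j) * cf (Sum.inr j)
      = (u j : ℂ) * ((Real.cosh (γ j) : ℂ) + (Real.sinh (γ j) : ℂ)) := by
    intro j
    simp only [haf, hbf, hcf, hdf, Sum.elim_inr, htr, Complex.ofReal_mul, Complex.ofReal_inv,
      Complex.ofReal_exp, Complex.ofReal_neg]
    simp only [heg, hen]
    linear_combination hypP11 ((Real.sqrt (2 * Real.sinh (γ j)) : ℝ) : ℂ) ((Real.cosh (γ j)) : ℂ)
      ((Real.sinh (γ j)) : ℂ) ((u j : ℝ) : ℂ) (hvh j) (hv2C j) (hpyh j) (hu2 j)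
  have P12h : ∀ j, (df (Sum.inr j) * tf (Sum.inr j) - bf (Sum.inr j)) * bf (Sum.inr j)
      - df (Sum.inr j) * df (Sum.inr j) = 0 := by
    intro j
    simp only [haf, hbf, hcf, hdf, Sum.elim_inr, htr, Complex.ofReal_mul, Complex.ofReal_inv,
      Complex.ofReal_exp, Complex.ofReal_neg]
    simp only [heg, hen]
    linear_combination hypP12 ((Real.sqrt (2 * Real.sinh (γ j)) : ℝ) : ℂ) ((Real.cosh (γ j)) : ℂ)
      ((Real.sinh (γ j)) : ℂ) ((u j : ℝ) : ℂ) (hvh j) (hv2C j) (hpyh j) (hu2 j)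
  have P21h : ∀ j, (af (Sum.inr j) - cf (Sum.inr j) * tf (Sum.inr j)) * af (Sum.inr j)
      + cf (Sum.inr j) * cf (Sum.inr j) = 0 := by
    intro j
    simp only [haf, hbf, hcf, hdf, Sum.elim_inr, htr, Complex.ofReal_mul, Complex.ofReal_inv,
      Complex.ofReal_exp, Complex.ofReal_neg]
    simp only [heg, hen]
    linear_combination hypP21 ((Real.sqrt (2 * Real.sinh (γ j)) : ℝ) : ℂ) ((Real.cosh (γ j)) : ℂ)
      ((Real.sinh (γ j)) : ℂ) ((u j : ℝ) : ℂ) (hvh j) (hv2C j) (hpyh j) (hu2 j)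
  have P22h : ∀ j, (af (Sum.inr j) - cf (Sum.inr j) * tf (Sum.inr j)) * bf (Sum.inr j)
      + cf (Sum.inr j) * df (Sum.inr j)
      = (u j : ℂ) * ((Real.cosh (γ j) : ℂ) - (Real.sinh (γ j) : ℂ)) := by
    intro j
    simp only [haf, hbf, hcf, hdf, Sum.elim_inr, htr, Complex.ofReal_mul, Complex.ofReal_inv,
      Complex.ofReal_exp, Complex.ofReal_neg]
    simp only [heg, hen]
    linear_combination hypP22 ((Real.sqrt (2 * Real.sinh (γ j)) : ℝ) : ℂ) ((Real.cosh (γ j)) : ℂ)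
      ((Real.sinh (γ j)) : ℂ) ((u j : ℝ) : ℂ) (hvh j) (hv2C j) (hpyh j) (hu2 j)
  -- exponential expansion
  have hexp : ∀ i, Complex.exp (Complex.I * (k i)) =
      ((Real.cos (k i)) : ℂ) + ((Real.sin (k i)) : ℂ) * Complex.I := by
    intro i
    rw [mul_comm, Complex.exp_mul_I, ← Complex.ofReal_cos, ← Complex.ofReal_sin]
  have hexp' : ∀ i, Complex.exp (-(Complex.I * (k i))) =
      ((Real.cos (k i)) : ℂ) - ((Real.sin (k i)) : ℂ) * Complex.I := by
    intro i
    rw [show -(Complex.I * ((k i : ℝ) : ℂ)) = ((-(k i) : ℝ) : ℂ) * Complex.I by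
        push_cast; ring,
      Complex.exp_mul_I, ← Complex.ofReal_cos, ← Complex.ofReal_sin, Real.cos_neg, Real.sin_neg]
    push_cast
    ring
  -- the four scalar hypotheses of the key lemma
  have H1 : ∀ x, ((df x * tf x - bf x) * af x - df x * cf x)
      - Complex.I * Complex.I * ((af x - cf x * tf x) * bf x + cf x * df x)
      + Complex.I * (((af x - cf x * tf x) * af x + cf x * cf x)
        - ((df x * tf x - bf x) * bf x - df x * df x)) = 2 * r1 x := by
    rintro (i | j)
    · rw [P11e i, P12e i, P21e i, P22e i, hr1]
      simp only [Sum.elim_inl]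
      rw [hexp i, Complex.I_mul_I]
      ring
    · rw [P11h j, P12h j, P21h j, P22h j, hr1]
      simp only [Sum.elim_inr]
      rw [Complex.I_mul_I]
      push_cast
      ring
  have H2 : ∀ x, ((df x * tf x - bf x) * af x - df x * cf x)
      + Complex.I * Complex.I * ((af x - cf x * tf x) * bf x + cf x * df x)
      + Complex.I * (((af x - cf x * tf x) * af x + cf x * cf x)
        + ((df x * tf x - bf x) * bf x - df x * df x)) = 2 * r2 x := by
    rintro (i | j)
    · rw [P11e i, P12e i, P21e i, P22e i, hr2]
      simp only [Sum.elim_inl]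
      rw [Complex.I_mul_I]
      ring
    · rw [P11h j, P12h j, P21h j, P22h j, hr2]
      simp only [Sum.elim_inr]
      rw [Complex.I_mul_I]
      push_cast
      ring
  have H3 : ∀ x, ((df x * tf x - bf x) * af x - df x * cf x)
      + Complex.I * Complex.I * ((af x - cf x * tf x) * bf x + cf x * df x)
      - Complex.I * (((af x - cf x * tf x) * af x + cf x * cf x)
        + ((df x * tf x - bf x) * bf x - df x * df x)) = 2 * r2 x := by
    rintro (i | j)
    · rw [P11e i, P12e i, P21e i, P22e i, hr2]
      simp only [Sum.elim_inl]
      rw [Complex.I_mul_I]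
      ring
    · rw [P11h j, P12h j, P21h j, P22h j, hr2]
      simp only [Sum.elim_inr]
      rw [Complex.I_mul_I]
      push_cast
      ring
  have H4 : ∀ x, ((df x * tf x - bf x) * af x - df x * cf x)
      - Complex.I * Complex.I * ((af x - cf x * tf x) * bf x + cf x * df x)
      - Complex.I * (((af x - cf x * tf x) * af x + cf x * cf x)
        - ((df x * tf x - bf x) * bf x - df x * df x)) = 2 * r4 x := by
    rintro (i | j)
    · rw [P11e i, P12e i, P21e i, P22e i, hr4]
      simp only [Sum.elim_inl]
      rw [hexp' i, Complex.I_mul_I]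
      ring
    · rw [P11h j, P12h j, P21h j, P22h j, hr4]
      simp only [Sum.elim_inr]
      rw [Complex.I_mul_I]
      push_cast
      ring
  -- assemble
  rw [hMinvEq, hM, hCH]
  simp only [CayleyN, mul_assoc]
  rw [hconj (Matrix.fromBlocks (diagonal af) (diagonal bf) (diagonal cf) (diagonal df) *
    (((Real.sqrt 2 : ℂ))⁻¹ • fromBlocks 1 1 (-(Complex.I • 1)) (Complex.I • 1)))]
  rw [cayley_key af bf cf df tf r1 r2 r2 r4 H1 H2 H3 H4]
  rw [hr1, hr2, hr4, ← Matrix.fromBlocks_diagonal, ← Matrix.fromBlocks_diagonal,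
    ← Matrix.fromBlocks_diagonal, Matrix.diagonal_zero]
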